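/- Let 1 ≤ i ≤ n and let α be any root of s_{n,i}(t) in an algebraic closure of F_p. Then α lies in a field with q^k elements for some k with n − i + 1 ≤ k ≤ n; that is, α^{q^k} = α for some such k. -/
import Mathlib

open Polynomial

/-- The `i`-th `(n,q)`-elementary symmetric polynomial
`s_{n,i}(t) = Σ_{S ⊆ {0,…,n−1}, |S| = i} t^(Σ_{j ∈ S} q^j)`. -/
noncomputable def snq (q n i : ℕ) (R : Type*) [CommRing R] : Polynomial R :=
  ∑ S ∈ Finset.powersetCard i (Finset.range n), X ^ (∑ j ∈ S, q ^ j)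

section Core
variable {K : Type*} [Field K]

private noncomputable def Gw (x : ℕ → K) (m len : ℕ) : K[X] :=
  ∏ j ∈ Finset.range len, (X + C (x (m + j)))

private lemma Gw_monic (x : ℕ → K) (m len : ℕ) : (Gw x m len).Monic :=
  monic_prod_of_monic _ _ (fun _ _ => monic_X_add_C _)

private lemma Gw_natDegree (x : ℕ → K) (m len : ℕ) : (Gw x m len).natDegree = len := by
  unfold Gw
  rw [natDegree_prod]
  · simp
  · intro j _; exact (monic_X_add_C _).ne_zero

private lemma Gw_split (x : ℕ → K) (m a b : ℕ) :
    Gw x m (a + b) = Gw x m a * Gw x (m + a) b := by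
  unfold Gw
  rw [Finset.prod_range_add]
  congr 1
  exact Finset.prod_congr rfl (fun j _ => by rw [add_assoc])

private lemma Gw_peel (x : ℕ → K) (m len : ℕ) :
    Gw x m (len + 1) = (X + C (x m)) * Gw x (m + 1) len := by
  unfold Gw
  rw [Finset.prod_range_succ', mul_comm]
  congr 1
  · exact Finset.prod_congr rfl (fun j _ => by
      rw [show m + (j + 1) = m + 1 + j from by omega])

private lemma Gw_shift (x : ℕ → K) (d : ℕ) (hper : ∀ j, x (j + d) = x j) (m len : ℕ) :
    Gw x (m + d) len = Gw x m len := by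
  unfold Gw
  refine Finset.prod_congr rfl (fun j _ => ?_)
  rw [add_right_comm, hper]

private lemma Gw_period (x : ℕ → K) (d : ℕ) (hper : ∀ j, x (j + d) = x j) (m : ℕ) :
    Gw x m d = Gw x 0 d := by
  induction m with
  | zero => rfl
  | succ m ih =>
    have h1 : Gw x m (d + 1) = Gw x m d * (X + C (x (m + d))) := by
      unfold Gw; rw [Finset.prod_range_succ]
    have h2 : Gw x m (d + 1) = (X + C (x m)) * Gw x (m + 1) d := Gw_peel x m d
    rw [hper m] at h1
    rw [h1, mul_comm] at h2
    have := mul_left_cancel₀ (monic_X_add_C (x m)).ne_zero h2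
    rw [← this, ih]

private lemma Gw_decomp (x : ℕ → K) (d : ℕ) (hper : ∀ j, x (j + d) = x j) (s : ℕ) :
    ∀ m r0, Gw x m (s * d + r0) = (Gw x 0 d) ^ s * Gw x m r0 := by
  induction s with
  | zero => intro m r0; simp
  | succ s ih =>
    intro m r0
    rw [show (s + 1) * d + r0 = d + (s * d + r0) from by ring,
      Gw_split, ih, Gw_shift x d hper, Gw_period x d hper m, pow_succ]
    ring

private theorem core (x : ℕ → K) (d n i : ℕ) (hd : 0 < d)
    (hper : ∀ j, x (j + d) = x j)
    (hdist : ∀ m r', 0 < r' → r' < d → x m ≠ x (m + r'))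
    (hi1 : 1 ≤ i) (hin : i ≤ n)
    (h0 : ∀ m : ℕ, (Gw x m n).coeff (n - i) = 0) :
    n % d < i := by
  by_contra hcon
  push_neg at hcon  -- i ≤ n % d
  set s := n / d with hs
  set r := n % d with hr
  have hrd : r < d := Nat.mod_lt _ hd
  have hn : s * d + r = n := by rw [hs, hr, mul_comm]; exact Nat.div_add_mod n d
  set P : K[X] := (Gw x 0 d) ^ s with hP
  have step : ∀ i' r', 1 ≤ i' → i' ≤ r' → r' < d →
      (∀ m, (P * Gw x m r').coeff (s * d + r' - i') = 0) →
      (∀ m, (P * Gw x m (r' - 1)).coeff (s * d + (r' - 1) - (i' - 1)) = 0) := by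
    intro i' r' h1 h2 h3 H
    have key : ∀ m, (P * Gw x (m + 1) (r' - 1)).coeff (s * d + r' - i') = 0 := by
      intro m
      have e1 := H m
      have e2 := H (m + 1)
      have hr1 : r' - 1 + 1 = r' := Nat.succ_pred_eq_of_pos (lt_of_lt_of_le h1 h2)
      have g1 : Gw x m r' = (X + C (x m)) * Gw x (m + 1) (r' - 1) := by
        rw [← hr1]; exact Gw_peel x m (r' - 1)
      have g2 : Gw x (m + 1) r' = Gw x (m + 1) (r' - 1) * (X + C (x (m + r'))) := by
        conv_lhs => rw [← hr1]
        unfold Gw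
        rw [Finset.prod_range_succ, show m + 1 + (r' - 1) = m + r' from by omega]
      rw [g1] at e1
      rw [g2] at e2
      set U := P * Gw x (m + 1) (r' - 1) with hU
      have e1' : (U * (X + C (x m))).coeff (s * d + r' - i') = 0 := by
        rw [← e1]; rw [hU]; ring_nf
      have e2' : (U * (X + C (x (m + r')))).coeff (s * d + r' - i') = 0 := by
        rw [← e2]; rw [hU]; ring_nf
      have hsub : (C (x m - x (m + r')) * U).coeff (s * d + r' - i') = 0 := by
        have hUe : C (x m - x (m + r')) * U
            = U * (X + C (x m)) - U * (X + C (x (m + r'))) := by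
          rw [map_sub]; ring
        rw [hUe, coeff_sub, e1', e2', sub_zero]
      rw [coeff_C_mul] at hsub
      rcases mul_eq_zero.mp hsub with h | h
      · exact absurd (sub_eq_zero.mp h) (hdist m r' (by omega) h3)
      · exact h
    intro m
    rw [← Gw_shift x d hper m (r' - 1), show m + d = (m + (d - 1)) + 1 from by omega]
    have hkey := key (m + (d - 1))
    rwa [show s * d + r' - i' = s * d + (r' - 1) - (i' - 1) from by omega] at hkey
  have descent : ∀ t, t ≤ i →
      ∀ m, (P * Gw x m (r - t)).coeff (s * d + (r - t) - (i - t)) = 0 := by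
    intro t
    induction t with
    | zero =>
      intro _ m
      have h := h0 m
      rw [← hn, Gw_decomp x d hper s m r, ← hP] at h
      rwa [show s * d + r - i = s * d + (r - 0) - (i - 0) from by omega] at h
    | succ t ih =>
      intro ht m
      have h' := ih (by omega)
      have hst := step (i - t) (r - t) (by omega) (by omega) (by omega) h' m
      rwa [show r - t - 1 = r - (t + 1) from by omega,
        show i - t - 1 = i - (t + 1) from by omega] at hst
  have final := descent i le_rfl 0
  rw [Nat.sub_self, Nat.sub_zero] at final
  have hmonic : (P * Gw x 0 (r - i)).Monic :=
    ((Gw_monic x 0 d).pow s).mul (Gw_monic x 0 (r - i))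
  have hPdeg : P.natDegree = s * d := by
    rw [hP, natDegree_pow, Gw_natDegree]
  have hdeg : (P * Gw x 0 (r - i)).natDegree = s * d + (r - i) := by
    rw [((Gw_monic x 0 d).pow s).natDegree_mul (Gw_monic x 0 (r - i)), hPdeg, Gw_natDegree]
  rw [← hdeg] at final
  rw [hmonic.coeff_natDegree] at final
  exact one_ne_zero final

end Core

section Main
variable {K : Type*} [Field K]

private lemma pow_pow_fix {α : K} {a : ℕ} (h : α ^ a = α) : ∀ c, α ^ a ^ c = α := by
  intro c
  induction c with
  | zero => simp
  | succ c ih => rw [pow_succ, pow_mul, ih, h]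

private lemma main_aux (p e n i q : ℕ) [Fact p.Prime] [CharP K p]
    (he : 0 < e) (hi1 : 1 ≤ i) (hin : i ≤ n) (hq : q = p ^ e) (α : K)
    (hex : ∃ m, 0 < m ∧ α ^ p ^ m = α)
    (hroot : (snq q n i K).eval α = 0) :
    ∃ k, n - i + 1 ≤ k ∧ k ≤ n ∧ α ^ q ^ k = α := by
  have hp : p.Prime := Fact.out
  classical
  obtain ⟨m0, hm0, hαm0⟩ := hex
  have hqm0 : α ^ q ^ m0 = α := by
    have : q ^ m0 = (p ^ m0) ^ e := by rw [hq, ← pow_mul, ← pow_mul, mul_comm]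
    rw [this]
    exact pow_pow_fix hαm0 e
  have hEx : ∃ k, 0 < k ∧ α ^ q ^ k = α := ⟨m0, hm0, hqm0⟩
  set d := Nat.find hEx with hdDef
  obtain ⟨hd, hαd⟩ : 0 < d ∧ α ^ q ^ d = α := Nat.find_spec hEx
  have hmin : ∀ k, 0 < k → k < d → α ^ q ^ k ≠ α := by
    intro k hk hkd hcon
    exact Nat.find_min hEx hkd ⟨hk, hcon⟩
  set x : ℕ → K := fun j => α ^ q ^ j with hx
  have hxq : ∀ a, x a ^ q = x (a + 1) := by
    intro a
    rw [hx]
    simp only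
    rw [← pow_mul, ← pow_succ]
  have hper : ∀ j, x (j + d) = x j := by
    intro j
    show α ^ q ^ (j + d) = α ^ q ^ j
    rw [pow_add, mul_comm, pow_mul, hαd]
  have hqpow : ∀ a : ℕ, q ^ a = p ^ (e * a) := by
    intro a; rw [hq, ← pow_mul]
  have hdist : ∀ m r', 0 < r' → r' < d → x m ≠ x (m + r') := by
    intro m r' hr0 hrd hcon
    have h1 : (α ^ q ^ r') ^ p ^ (e * m) = α ^ p ^ (e * m) := by
      rw [← hqpow, ← pow_mul, ← pow_add, add_comm r' m]
      exact hcon.symm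
    have h2 : α ^ q ^ r' = α := by
      have hsub : (α ^ q ^ r' - α) ^ p ^ (e * m) = 0 := by
        rw [sub_pow_char_pow, h1, sub_self]
      have := pow_eq_zero_iff (pow_ne_zero (e * m) hp.ne_zero) |>.mp hsub
      exact sub_eq_zero.mp this
    exact hmin r' hr0 hrd h2
  -- the coefficient vanishing
  have hbase : (Gw x 0 n).coeff (n - i) = 0 := by
    have hcoeff : (Gw x 0 n).coeff (n - i)
        = ∑ S ∈ Finset.powersetCard i (Finset.range n), ∏ j ∈ S, x j := by
      unfold Gw
      rw [Finset.prod_X_add_C_coeff (Finset.range n) (fun j => x (0 + j))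
        (by rw [Finset.card_range]; omega)]
      rw [Finset.card_range, show n - (n - i) = i from by omega]
      exact Finset.sum_congr rfl (fun S _ => Finset.prod_congr rfl (fun j _ => by rw [zero_add]))
    have hev : (snq q n i K).eval α
        = ∑ S ∈ Finset.powersetCard i (Finset.range n), ∏ j ∈ S, x j := by
      unfold snq
      rw [eval_finset_sum]
      refine Finset.sum_congr rfl (fun S _ => ?_)
      rw [eval_pow, eval_X, ← Finset.prod_pow_eq_pow_sum]
    rw [hcoeff, ← hev, hroot]
  have hmapG : ∀ m len, Gw x (m + 1) len
      = Polynomial.map (iterateFrobenius K p e) (Gw x m len) := by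
    intro m len
    unfold Gw
    rw [Polynomial.map_prod]
    refine Finset.prod_congr rfl (fun j _ => ?_)
    rw [Polynomial.map_add, Polynomial.map_C, map_X]
    congr 1
    rw [iterateFrobenius_def, ← hq, hxq, show m + j + 1 = m + 1 + j from by omega]
  have h0 : ∀ m, (Gw x m n).coeff (n - i) = 0 := by
    intro m
    induction m with
    | zero => exact hbase
    | succ m ih => rw [hmapG, Polynomial.coeff_map, ih, map_zero]
  have hri : n % d < i := core x d n i hd hper hdist hi1 hin h0
  refine ⟨n - n % d, ?_, ?_, ?_⟩
  · omega
  · omega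
  · have hn := Nat.div_add_mod n d
    have hk : n - n % d = d * (n / d) := by omega
    rw [hk]
    induction (n / d) with
    | zero => simp
    | succ t ih => rw [Nat.mul_succ, pow_add, pow_mul, ih, hαd]

end Main

theorem stmt_4 (p e n i q : ℕ) [Fact p.Prime] (he : 0 < e) (hn : 2 ≤ n)
    (hi1 : 1 ≤ i) (hin : i ≤ n) (hq : q = p ^ e)
    (α : AlgebraicClosure (ZMod p))
    (hroot : (snq q n i (AlgebraicClosure (ZMod p))).eval α = 0) :
    ∃ k, n - i + 1 ≤ k ∧ k ≤ n ∧ α ^ q ^ k = α := by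
  refine main_aux p e n i q he hi1 hin hq α ?_ hroot
  have halg : IsIntegral (ZMod p) α := (Algebra.IsAlgebraic.isAlgebraic α).isIntegral
  set F := IntermediateField.adjoin (ZMod p) {α} with hF
  haveI : FiniteDimensional (ZMod p) F := IntermediateField.adjoin.finiteDimensional halg
  haveI : Finite F := Module.finite_of_finite (ZMod p)
  haveI : Fintype F := Fintype.ofFinite F
  haveI : CharP F p := charP_of_injective_algebraMap (algebraMap (ZMod p) F).injective p
  obtain ⟨m, _, hcard⟩ := FiniteField.card F p
  have hmem : α ∈ F := IntermediateField.mem_adjoin_simple_self (ZMod p) α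
  have hpc := FiniteField.pow_card (⟨α, hmem⟩ : F)
  rw [hcard] at hpc
  refine ⟨m, m.2, ?_⟩
  have h2 := congrArg (fun y : F => (y : AlgebraicClosure (ZMod p))) hpc
  push_cast at h2
  exact h2
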